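/- Define f : (0,1) → ℝ by f(P) = P·log(2P/(1+P)) + ((1−P)/2)·log((1−P)/(1+P)). Then f attains a strict global minimum on (0,1) at P* = 1/√5; that is, f(1/√5) < f(P) for every P ∈ (0,1) with P ≠ 1/√5. Moreover the corresponding optimal splitting ratio 2P*/(1+P*) equals (√5 − 1)/2, the reciprocal of the golden ratio. -/

import Mathlib

open Real Set

/-- Nice form of the objective function. -/
noncomputable def Fnice (x : ℝ) : ℝ :=
  x * (Real.log x + Real.log 2 - Real.log (1 + x)) +
    ((1 - x) / 2) * (Real.log (1 - x) - Real.log (1 + x))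

lemma hasDerivFnice {P : ℝ} (h0 : 0 < P) (h1 : P < 1) :
    HasDerivAt Fnice
      (Real.log 2 + Real.log P - (1/2) * Real.log (1 - P) - (1/2) * Real.log (1 + P)) P := by
  have hP : P ≠ 0 := h0.ne'
  have h1p : (1 : ℝ) + P ≠ 0 := by linarith
  have h1m : (1 : ℝ) - P ≠ 0 := by linarith
  have hl : HasDerivAt Real.log P⁻¹ P := Real.hasDerivAt_log hP
  have hid : HasDerivAt (fun x : ℝ => x) 1 P := hasDerivAt_id P
  have hl1 : HasDerivAt (fun x => Real.log (1 + x)) (1 + P)⁻¹ P := by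
    have h : HasDerivAt (fun x : ℝ => 1 + x) 1 P := hid.const_add 1
    exact ((Real.hasDerivAt_log h1p).comp P h).congr_deriv (by ring)
  have hl2 : HasDerivAt (fun x => Real.log (1 - x)) (-(1 - P)⁻¹) P := by
    have h : HasDerivAt (fun x : ℝ => 1 - x) (-1) P := hid.const_sub 1
    exact ((Real.hasDerivAt_log h1m).comp P h).congr_deriv (by ring)
  have hA : HasDerivAt (fun x => Real.log x + Real.log 2 - Real.log (1 + x))
      (P⁻¹ - (1 + P)⁻¹) P := (hl.add_const _).sub hl1
  have ht1 := hid.mul hA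
  have hB : HasDerivAt (fun x : ℝ => (1 - x) / 2) ((-1) / 2) P :=
    (hid.const_sub 1).div_const 2
  have hC : HasDerivAt (fun x => Real.log (1 - x) - Real.log (1 + x))
      (-(1 - P)⁻¹ - (1 + P)⁻¹) P := hl2.sub hl1
  have ht2 := hB.mul hC
  have htot := ht1.add ht2
  refine htot.congr_deriv ?_
  field_simp
  ring

lemma Fderiv_eq {P : ℝ} (h0 : 0 < P) (h1 : P < 1) :
    deriv Fnice P
      = Real.log 2 + Real.log P - (1/2) * Real.log (1 - P) - (1/2) * Real.log (1 + P) :=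
  (hasDerivFnice h0 h1).deriv

lemma two_deriv {P : ℝ} (h0 : 0 < P) (h1 : P < 1) :
    2 * (Real.log 2 + Real.log P - (1/2) * Real.log (1 - P) - (1/2) * Real.log (1 + P))
      = Real.log (4 * P ^ 2) - Real.log (1 - P ^ 2) := by
  have hP : P ≠ 0 := h0.ne'
  have h1p : (1 : ℝ) + P ≠ 0 := by linarith
  have h1m : (1 : ℝ) - P ≠ 0 := by linarith
  have e1 : Real.log (4 * P ^ 2) = 2 * Real.log 2 + 2 * Real.log P := by
    have : (4 : ℝ) * P ^ 2 = (2 * P) ^ 2 := by ring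
    rw [this, Real.log_pow, Real.log_mul (by norm_num) hP]
    push_cast; ring
  have e2 : Real.log (1 - P ^ 2) = Real.log (1 - P) + Real.log (1 + P) := by
    have : (1 : ℝ) - P ^ 2 = (1 - P) * (1 + P) := by ring
    rw [this, Real.log_mul h1m h1p]
  rw [e1, e2]; ring

lemma sqrt5_pos : (0 : ℝ) < Real.sqrt 5 := Real.sqrt_pos.mpr (by norm_num)

lemma sqrt5_sq : (Real.sqrt 5) ^ 2 = 5 := Real.sq_sqrt (by norm_num)

lemma cstar_mem : (1 / Real.sqrt 5) ∈ Set.Ioo (0:ℝ) 1 := by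
  constructor
  · positivity
  · rw [div_lt_one sqrt5_pos]
    nlinarith [sqrt5_sq, sqrt5_pos]

lemma Fderiv_pos {P : ℝ} (hc : 1 / Real.sqrt 5 < P) (h1 : P < 1) :
    0 < deriv Fnice P := by
  have h0 : 0 < P := lt_trans cstar_mem.1 hc
  have h1m : (0 : ℝ) < 1 - P ^ 2 := by nlinarith
  have key : 1 - P ^ 2 < 4 * P ^ 2 := by
    have hP5 : 1 < P * Real.sqrt 5 := by
      rw [div_lt_iff₀ sqrt5_pos] at hc; linarith
    nlinarith [sqrt5_sq, sqrt5_pos]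
  have hlog := Real.log_lt_log h1m key
  rw [Fderiv_eq h0 h1]
  nlinarith [two_deriv h0 h1]

lemma Fderiv_neg {P : ℝ} (h0 : 0 < P) (hc : P < 1 / Real.sqrt 5) :
    deriv Fnice P < 0 := by
  have h1 : P < 1 := lt_trans hc cstar_mem.2
  have h4 : (0 : ℝ) < 4 * P ^ 2 := by positivity
  have key : 4 * P ^ 2 < 1 - P ^ 2 := by
    have hP5 : P * Real.sqrt 5 < 1 := by
      rw [lt_div_iff₀ sqrt5_pos] at hc; linarith
    nlinarith [sqrt5_sq, sqrt5_pos]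
  have hlog := Real.log_lt_log h4 key
  rw [Fderiv_eq h0 h1]
  nlinarith [two_deriv h0 h1]

lemma cont_Fnice : ContinuousOn Fnice (Set.Ioo (0:ℝ) 1) := fun x hx =>
  ((hasDerivFnice hx.1 hx.2).continuousAt).continuousWithinAt

lemma f_eq_Fnice (f : ℝ → ℝ)
    (hf : ∀ P, f P = P * Real.log (2 * P / (1 + P))
      + ((1 - P) / 2) * Real.log ((1 - P) / (1 + P)))
    {P : ℝ} (h0 : 0 < P) (h1 : P < 1) : f P = Fnice P := by
  have hP : P ≠ 0 := h0.ne'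
  have h1p : (1 : ℝ) + P ≠ 0 := by linarith
  have h1m : (1 : ℝ) - P ≠ 0 := by linarith
  rw [hf, Fnice, Real.log_div (by positivity : (2:ℝ) * P ≠ 0) h1p,
    Real.log_mul (by norm_num) hP, Real.log_div h1m h1p]
  ring

theorem stmt_2 (f : ℝ → ℝ)
    (hf : ∀ P, f P = P * Real.log (2 * P / (1 + P))
      + ((1 - P) / 2) * Real.log ((1 - P) / (1 + P))) :
    (1 / Real.sqrt 5) ∈ Set.Ioo (0:ℝ) 1 ∧
    (∀ P ∈ Set.Ioo (0:ℝ) 1, P ≠ 1 / Real.sqrt 5 → f (1 / Real.sqrt 5) < f P) ∧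
    2 * (1 / Real.sqrt 5) / (1 + 1 / Real.sqrt 5) = (Real.sqrt 5 - 1) / 2 := by
  set c := 1 / Real.sqrt 5 with hcdef
  have hc := cstar_mem
  refine ⟨hc, ?_, ?_⟩
  · -- strict global minimum
    have hmono : StrictMonoOn Fnice (Set.Ico c 1) := by
      apply strictMonoOn_of_deriv_pos (convex_Ico c 1)
      · exact cont_Fnice.mono (fun x hx => ⟨lt_of_lt_of_le hc.1 hx.1, hx.2⟩)
      · intro x hx
        rw [interior_Ico] at hx
        exact Fderiv_pos hx.1 hx.2
    have hanti : StrictAntiOn Fnice (Set.Ioc (0:ℝ) c) := by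
      apply strictAntiOn_of_deriv_neg (convex_Ioc 0 c)
      · exact cont_Fnice.mono (fun x hx => ⟨hx.1, lt_of_le_of_lt hx.2 hc.2⟩)
      · intro x hx
        rw [interior_Ioc] at hx
        exact Fderiv_neg hx.1 hx.2
    intro P hP hne
    have hfP : f P = Fnice P := f_eq_Fnice f hf hP.1 hP.2
    have hfc : f c = Fnice c := f_eq_Fnice f hf hc.1 hc.2
    rw [hfP, hfc]
    rcases lt_or_gt_of_ne hne with h | h
    · exact hanti ⟨hP.1, le_of_lt h⟩ ⟨hc.1, le_refl c⟩ h
    · exact hmono ⟨le_refl c, hc.2⟩ ⟨le_of_lt h, hP.2⟩ h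
  · -- golden ratio identity
    have hs := sqrt5_pos
    have hsq := sqrt5_sq
    have h1s : (1 : ℝ) + 1 / Real.sqrt 5 ≠ 0 := by positivity
    rw [hcdef]
    field_simp
    nlinarith [sqrt5_sq, sqrt5_pos]
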